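/- For the Galerkin truncation $B_k^N(u) = \sum_{0<|h|,|k-h|,|k| \leq N} c_{h,k} u_h u_{k-h}$ of the 2D Navier–Stokes nonlinearity on the torus, the enstrophy is conserved: $\sum_{0 < |k| \leq N} B_k^N(u) |k|^2 \bar{u}_k = 0$ for every $N \in \mathbb{N}$ and every sequence $(u_k)$ with $u_{-k} = \bar{u}_k$. -/

import Mathlib

noncomputable def znorm (k : ℤ × ℤ) : ℝ := Real.sqrt ((k.1 : ℝ)^2 + (k.2 : ℝ)^2)

noncomputable def nsCoeff (h k : ℤ × ℤ) : ℝ :=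
  -(1 / (4 * Real.pi)) *
    (((-h.2 : ℝ) * k.1 + (h.1 : ℝ) * k.2) / (znorm h * znorm (k - h))) *
    (znorm k - 2 * ((h.1 : ℝ) * k.1 + (h.2 : ℝ) * k.2) / znorm k)

/-- Galerkin truncation `B_k^N(u) = ∑_{0<|h|,|k-h|,|k|≤N} c_{h,k} u_h u_{k-h}`. -/
noncomputable def galerkinB (N : ℕ) (u : ℤ × ℤ → ℂ) (k : ℤ × ℤ) : ℂ :=
  ∑ h ∈ Finset.Icc (-(N : ℤ), -(N : ℤ)) ((N : ℤ), (N : ℤ)),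
    if h ≠ 0 ∧ h ≠ k ∧ k - h ≠ 0 ∧ znorm h ≤ N ∧ znorm (k - h) ≤ N then
      (nsCoeff h k : ℂ) * u h * u (k - h)
    else 0

lemma znorm_sq (k : ℤ × ℤ) : znorm k ^ 2 = (k.1 : ℝ)^2 + (k.2 : ℝ)^2 := by
  rw [znorm, Real.sq_sqrt]; positivity

lemma znorm_neg (k : ℤ × ℤ) : znorm (-k) = znorm k := by
  simp [znorm]

lemma znorm_pos {k : ℤ × ℤ} (hk : k ≠ 0) : 0 < znorm k := by
  apply Real.sqrt_pos.mpr
  by_cases h : k.1 = 0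
  · have h2 : k.2 ≠ 0 := fun e => hk (Prod.ext_iff.mpr ⟨h, e⟩)
    have : (k.2 : ℝ) ≠ 0 := Int.cast_ne_zero.mpr h2
    nlinarith [sq_nonneg (k.1 : ℝ), sq_abs (k.2:ℝ), abs_pos.mpr this]
  · have : (k.1 : ℝ) ≠ 0 := Int.cast_ne_zero.mpr h
    nlinarith [sq_nonneg (k.2 : ℝ), sq_abs (k.1:ℝ), abs_pos.mpr this]

lemma mem_box {N : ℕ} {k : ℤ × ℤ} (hk : znorm k ≤ N) :
    k ∈ Finset.Icc (-(N : ℤ), -(N : ℤ)) ((N : ℤ), (N : ℤ)) := by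
  have h1 : |(k.1 : ℝ)| ≤ N := by
    calc |(k.1 : ℝ)| = Real.sqrt ((k.1:ℝ)^2) := (Real.sqrt_sq_eq_abs _).symm
    _ ≤ znorm k := Real.sqrt_le_sqrt (by nlinarith [sq_nonneg (k.2:ℝ)])
    _ ≤ N := hk
  have h2 : |(k.2 : ℝ)| ≤ N := by
    calc |(k.2 : ℝ)| = Real.sqrt ((k.2:ℝ)^2) := (Real.sqrt_sq_eq_abs _).symm
    _ ≤ znorm k := Real.sqrt_le_sqrt (by nlinarith [sq_nonneg (k.1:ℝ)])
    _ ≤ N := hk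
  have h1' : |k.1| ≤ (N:ℤ) := by exact_mod_cast (by exact_mod_cast h1 : (|k.1|:ℝ) ≤ (N:ℝ))
  have h2' : |k.2| ≤ (N:ℤ) := by exact_mod_cast (by exact_mod_cast h2 : (|k.2|:ℝ) ≤ (N:ℝ))
  rw [Finset.mem_Icc]
  constructor <;> constructor <;> simp_all [abs_le]

lemma nsCoeff_eq (h k : ℤ × ℤ) (hh : h ≠ 0) (hk : k ≠ 0) (hkh : k - h ≠ 0) :
    nsCoeff h k = -(1 / (4 * Real.pi)) * (((-h.2 : ℝ) * k.1 + (h.1 : ℝ) * k.2)) *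
      (znorm (k - h) ^ 2 - znorm h ^ 2) / (znorm h * znorm (k - h) * znorm k) := by
  have ha := znorm_pos hh
  have hb := znorm_pos hkh
  have hc := znorm_pos hk
  have key : znorm (k - h) ^ 2 - znorm h ^ 2
      = znorm k ^ 2 - 2 * ((h.1 : ℝ) * k.1 + (h.2 : ℝ) * k.2) := by
    rw [znorm_sq, znorm_sq, znorm_sq]
    simp only [Prod.fst_sub, Prod.snd_sub, Int.cast_sub]
    ring
  rw [nsCoeff, key]
  field_simp

lemma nsCoeff_triple (h k : ℤ × ℤ) (hh : h ≠ 0) (hk : k ≠ 0) (hkh : k - h ≠ 0) :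
    nsCoeff h k * znorm k ^ 2 + nsCoeff (k - h) (-h) * znorm h ^ 2
      + nsCoeff (-k) (h - k) * znorm (k - h) ^ 2 = 0 := by
  have ha := znorm_pos hh
  have hb := znorm_pos hkh
  have hc := znorm_pos hk
  have hh2 : (-h : ℤ × ℤ) ≠ 0 := neg_ne_zero.mpr hh
  have hk2 : (-k : ℤ × ℤ) ≠ 0 := neg_ne_zero.mpr hk
  have hhk2 : (h - k : ℤ × ℤ) ≠ 0 := by
    rw [show h - k = -(k - h) from by ring]; exact neg_ne_zero.mpr hkh
  have e1 : (-h : ℤ × ℤ) - (k - h) = -k := by ring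
  have e2 : (h - k : ℤ × ℤ) - -k = h := by ring
  rw [nsCoeff_eq h k hh hk hkh,
      nsCoeff_eq (k - h) (-h) hkh hh2 (by rw [e1]; exact hk2),
      nsCoeff_eq (-k) (h - k) hk2 hhk2 (by rw [e2]; exact hh),
      e1, e2, znorm_neg h, znorm_neg k,
      show h - k = -(k - h) from by ring, znorm_neg (k - h)]
  have hπ := Real.pi_ne_zero
  simp only [Prod.fst_sub, Prod.snd_sub, Prod.fst_neg, Prod.snd_neg, Int.cast_sub, Int.cast_neg]
  field_simp
  ring

def Qpred (N : ℕ) (p : (ℤ × ℤ) × (ℤ × ℤ)) : Prop :=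
  p.2 ≠ 0 ∧ p.1 ≠ 0 ∧ p.1 - p.2 ≠ 0 ∧
    znorm p.2 ≤ N ∧ znorm (p.1 - p.2) ≤ N ∧ znorm p.1 ≤ N

noncomputable def Fterm (u : ℤ × ℤ → ℂ) (p : (ℤ × ℤ) × (ℤ × ℤ)) : ℂ :=
  ((nsCoeff p.2 p.1 * znorm p.1 ^ 2 : ℝ) : ℂ) * (u p.2 * u (p.1 - p.2) * u (-p.1))

def tau (p : (ℤ × ℤ) × (ℤ × ℤ)) : (ℤ × ℤ) × (ℤ × ℤ) := (-p.2, p.1 - p.2)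

lemma tau_tau_tau (p : (ℤ × ℤ) × (ℤ × ℤ)) : tau (tau (tau p)) = p := by
  obtain ⟨a, b⟩ := p
  simp only [tau]
  rw [Prod.mk.injEq]
  constructor <;> ring

lemma Qpred_tau {N : ℕ} {p : (ℤ × ℤ) × (ℤ × ℤ)} (hp : Qpred N p) : Qpred N (tau p) := by
  obtain ⟨h1, h2, h3, h4, h5, h6⟩ := hp
  refine ⟨h3, neg_ne_zero.mpr h1, ?_, h5, ?_, ?_⟩
  · rw [show (tau p).1 - (tau p).2 = -p.1 from by simp [tau]; ring]
    exact neg_ne_zero.mpr h2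
  · rw [show (tau p).1 - (tau p).2 = -p.1 from by simp [tau]; ring, znorm_neg]; exact h6
  · show znorm (-p.2) ≤ N; rw [znorm_neg]; exact h4

lemma Fterm_triple (u : ℤ × ℤ → ℂ) (p : (ℤ × ℤ) × (ℤ × ℤ))
    (h1 : p.2 ≠ 0) (h2 : p.1 ≠ 0) (h3 : p.1 - p.2 ≠ 0) :
    Fterm u p + Fterm u (tau p) + Fterm u (tau (tau p)) = 0 := by
  obtain ⟨k, h⟩ := p
  simp only [Fterm, tau] at *
  rw [neg_neg h, neg_neg (k - h),
      show (-h : ℤ × ℤ) - (k - h) = -k from by ring,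
      show (-(k - h) : ℤ × ℤ) - -k = h from by ring,
      znorm_neg h, znorm_neg (k - h),
      show (-(k - h) : ℤ × ℤ) = h - k from by ring]
  have triple := nsCoeff_triple h k h1 h2 h3
  calc ((nsCoeff h k * znorm k ^ 2 : ℝ) : ℂ) * (u h * u (k - h) * u (-k)) +
      ((nsCoeff (k - h) (-h) * znorm h ^ 2 : ℝ) : ℂ) * (u (k - h) * u (-k) * u h) +
      ((nsCoeff (-k) (h - k) * znorm (k - h) ^ 2 : ℝ) : ℂ) * (u (-k) * u h * u (k - h))
      = ((nsCoeff h k * znorm k ^ 2 + nsCoeff (k - h) (-h) * znorm h ^ 2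
        + nsCoeff (-k) (h - k) * znorm (k - h) ^ 2 : ℝ) : ℂ)
        * (u h * u (k - h) * u (-k)) := by push_cast; ring
    _ = 0 := by rw [triple]; simp

/-- conservation of enstrophy by the Galerkin approximations:
`∑_{0<|k|≤N} B_k^N(u) |k|² conj(u_k) = 0`. -/
theorem galerkin_enstrophy_conservation (N : ℕ) (u : ℤ × ℤ → ℂ)
    (hreal : ∀ k : ℤ × ℤ, u (-k) = (starRingEnd ℂ) (u k)) :
    (∑ k ∈ Finset.Icc (-(N : ℤ), -(N : ℤ)) ((N : ℤ), (N : ℤ)),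
      if k ≠ 0 ∧ znorm k ≤ N then
        galerkinB N u k * ((znorm k ^ 2 : ℝ) : ℂ) * (starRingEnd ℂ) (u k)
      else 0) = 0 := by
  classical
  have step1 : ∀ k ∈ Finset.Icc (-(N : ℤ), -(N : ℤ)) ((N : ℤ), (N : ℤ)),
      (if k ≠ 0 ∧ znorm k ≤ N then
        galerkinB N u k * ((znorm k ^ 2 : ℝ) : ℂ) * (starRingEnd ℂ) (u k)
      else 0)
      = ∑ h ∈ Finset.Icc (-(N : ℤ), -(N : ℤ)) ((N : ℤ), (N : ℤ)),
          if Qpred N (k, h) then Fterm u (k, h) else 0 := by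
    intro k _
    by_cases hk : k ≠ 0 ∧ znorm k ≤ N
    · rw [if_pos hk, galerkinB, Finset.sum_mul, Finset.sum_mul]
      refine Finset.sum_congr rfl fun h _ => ?_
      by_cases hcond : h ≠ 0 ∧ h ≠ k ∧ k - h ≠ 0 ∧ znorm h ≤ N ∧ znorm (k - h) ≤ N
      · rw [if_pos hcond,
          if_pos (show Qpred N (k, h) from
            ⟨hcond.1, hk.1, hcond.2.2.1, hcond.2.2.2.1, hcond.2.2.2.2, hk.2⟩)]
        show (nsCoeff h k : ℂ) * u h * u (k - h) * ((znorm k ^ 2 : ℝ) : ℂ)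
            * (starRingEnd ℂ) (u k)
          = ((nsCoeff h k * znorm k ^ 2 : ℝ) : ℂ) * (u h * u (k - h) * u (-k))
        rw [hreal k]
        push_cast
        ring
      · rw [if_neg hcond, if_neg, zero_mul, zero_mul]
        intro hq
        obtain ⟨q1, q2, q3, q4, q5, q6⟩ := hq
        exact hcond ⟨q1, fun e => q3 (by rw [e, sub_self]), q3, q4, q5⟩
    · rw [if_neg hk]
      symm
      apply Finset.sum_eq_zero
      intro h _
      rw [if_neg]
      intro hq
      exact hk ⟨hq.2.1, hq.2.2.2.2.2⟩
  rw [Finset.sum_congr rfl step1,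
    ← Finset.sum_product (f := fun p : (ℤ × ℤ) × (ℤ × ℤ) =>
        if Qpred N p then Fterm u p else 0),
    ← Finset.sum_filter]
  set B := Finset.Icc (-(N : ℤ), -(N : ℤ)) ((N : ℤ), (N : ℤ))
  set T := Finset.filter (Qpred N) (B ×ˢ B) with hT
  have hmem : ∀ p ∈ T, tau p ∈ T := by
    intro p hp
    rw [hT, Finset.mem_filter] at hp ⊢
    have hq := Qpred_tau hp.2
    exact ⟨Finset.mem_product.mpr ⟨mem_box hq.2.2.2.2.2, mem_box hq.2.2.2.1⟩, hq⟩
  have hmem2 : ∀ p ∈ T, tau (tau p) ∈ T := fun p hp => hmem _ (hmem p hp)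
  have key1 : ∑ p ∈ T, Fterm u p = ∑ p ∈ T, Fterm u (tau p) :=
    Finset.sum_nbij' (fun p => tau (tau p)) tau hmem2 hmem
      (fun a _ => by rw [tau_tau_tau]) (fun a _ => tau_tau_tau a)
      (fun a _ => by rw [tau_tau_tau])
  have key2 : ∑ p ∈ T, Fterm u p = ∑ p ∈ T, Fterm u (tau (tau p)) :=
    Finset.sum_nbij' tau (fun p => tau (tau p)) hmem hmem2
      (fun a _ => tau_tau_tau a) (fun a _ => by rw [tau_tau_tau])
      (fun a _ => by rw [tau_tau_tau])
  have sum3 : (∑ p ∈ T, Fterm u p) + (∑ p ∈ T, Fterm u p) + (∑ p ∈ T, Fterm u p) = 0 := by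
    nth_rewrite 2 [key1]
    nth_rewrite 2 [key2]
    rw [← Finset.sum_add_distrib, ← Finset.sum_add_distrib]
    apply Finset.sum_eq_zero
    intro p hp
    have hq := (Finset.mem_filter.mp hp).2
    exact Fterm_triple u p hq.1 hq.2.1 hq.2.2.1
  have h3 : (3 : ℂ) * ∑ p ∈ T, Fterm u p = 0 := by linear_combination sum3
  exact (mul_eq_zero.mp h3).resolve_left (by norm_num)
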